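/- Let q and t be positive integers with t ≤ q, let Δ = q / t (integer division, so Δ = ⌊q/t⌋), and let m, e be integers. If 2 * |t*e - (q - t*Δ)*m| < q, then round of the rational number (t * (Δ*m + e)) / q equals m. -/

import Mathlib

/-- BFV rounding step: recovery of the message after scaling by `t/q`
and rounding to the nearest integer. -/
theorem bfv_rounding
    (q t : ℤ) (hq : 0 < q) (ht : 0 < t) (htq : t ≤ q)
    (Δ : ℤ) (hΔ : Δ = q / t) (m e : ℤ)
    (herr : 2 * |t * e - (q - t * Δ) * m| < q) :
    round (((t * (Δ * m + e) : ℤ) : ℚ) / (q : ℚ)) = m := by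
  set r : ℤ := t * e - (q - t * Δ) * m with hr
  have key : t * (Δ * m + e) = q * m + r := by ring
  have hq' : (0 : ℚ) < (q : ℚ) := by exact_mod_cast hq
  have : (((t * (Δ * m + e) : ℤ) : ℚ)) / (q : ℚ) = (m : ℚ) + (r : ℚ) / (q : ℚ) := by
    rw [key]; push_cast; field_simp
  rw [this, round_intCast_add]
  have h0 : round ((r : ℚ) / (q : ℚ)) = 0 := by
    rw [round_eq_zero_iff]
    have habs : |(r : ℚ) / (q : ℚ)| < 1 / 2 := by
      rw [abs_div, abs_of_pos hq', div_lt_div_iff₀ hq' (by norm_num)]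
      have : (2 : ℚ) * |(r : ℚ)| < q := by exact_mod_cast herr
      linarith
    constructor
    · have := neg_abs_le ((r : ℚ) / (q : ℚ)); linarith [abs_nonneg ((r : ℚ) / (q : ℚ))]
    · exact lt_of_le_of_lt (le_abs_self _) habs
  rw [h0, add_zero]
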